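/- For all positive integers k_1, k_2, k_3, the refined q,t-Catalan number C_{(k_1,k_2,k_3)}(q,t) is symmetric in q and t: C_{(k_1,k_2,k_3)}(q,t) = C_{(k_1,k_2,k_3)}(t,q). -/

import Mathlib

/-- The Xin–Zhang bounce statistic of the `(k₁,k₂,k₃)`-Dyck path with red ranks
`(0, r₂, r₃)`:  `2(k₁-r₂) + r₂ + k₂ - r₃ - min(r₂,k₂)` if
`r₂ + k₂ - r₃ ≥ 2 min(r₂,k₂)`, and `2(k₁-r₂) + ⌈(r₂+k₂-r₃)/2⌉` otherwise
(it does not involve `k₃`). -/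
def bounceThree (k₁ k₂ r₂ r₃ : ℕ) : ℕ :=
  if r₃ + 2 * min r₂ k₂ ≤ r₂ + k₂ then
    2 * (k₁ - r₂) + (r₂ + k₂ - r₃ - min r₂ k₂)
  else
    2 * (k₁ - r₂) + (r₂ + k₂ - r₃ + 1) / 2

open MvPolynomial in
/-- The refined q,t-Catalan number `C_{(k₁,k₂,k₃)}(q,t)`: the sum over pairs
`(r₂,r₃)` with `0 ≤ r₂ ≤ k₁` and `0 ≤ r₃ ≤ r₂ + k₂` of `q^{r₂+r₃} t^{bounce}`
(here `q = X 0`, `t = X 1`). -/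
noncomputable def Cthree (k₁ k₂ k₃ : ℕ) : MvPolynomial (Fin 2) ℤ :=
  ∑ r₂ ∈ Finset.range (k₁ + 1), ∑ r₃ ∈ Finset.range (r₂ + k₂ + 1),
    X 0 ^ (r₂ + r₃) * X 1 ^ bounceThree k₁ k₂ r₂ r₃

/-- Auxiliary piecewise-linear function `F(a) = k₂` if `a ≤ k₂`, else `⌈(a+k₂)/2⌉`. -/
def FvXZ (k₂ a : ℕ) : ℕ := if a ≤ k₂ then k₂ else (a + k₂ + 1) / 2

/-- The first coordinate of the symmetry involution. -/
def phiXZ (k₁ k₂ r₂ r₃ : ℕ) : ℕ :=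
  if r₂ + r₃ + bounceThree k₁ k₂ r₂ r₃ = 2 * k₁ then
    FvXZ k₂ (bounceThree k₁ k₂ r₂ r₃) + r₂ - FvXZ k₂ (r₂ + r₃)
  else
    FvXZ k₂ (bounceThree k₁ k₂ r₂ r₃) - (r₂ + r₃ + bounceThree k₁ k₂ r₂ r₃ - 2 * k₁)

lemma FvXZ_spec (k₂ a : ℕ) :
    (a ≤ k₂ ∧ FvXZ k₂ a = k₂) ∨
    (k₂ < a ∧ (2 * FvXZ k₂ a = a + k₂ ∨ 2 * FvXZ k₂ a = a + k₂ + 1)) := by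
  unfold FvXZ; split_ifs <;> omega

lemma bounce_char (k₁ k₂ r₂ r₃ : ℕ) (h2 : r₂ ≤ k₁) (h3 : r₃ ≤ r₂ + k₂) :
    bounceThree k₁ k₂ r₂ r₃ + (r₂ + r₃) + min r₂ (FvXZ k₂ (r₂ + r₃)) =
      2 * k₁ + FvXZ k₂ (r₂ + r₃) := by
  unfold bounceThree FvXZ; split_ifs <;> omega

lemma phiXZ_char (k₁ k₂ r₂ r₃ : ℕ) (h2 : r₂ ≤ k₁) (h3 : r₃ ≤ r₂ + k₂) :
    (r₂ + r₃ + bounceThree k₁ k₂ r₂ r₃ = 2 * k₁ ∧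
      phiXZ k₁ k₂ r₂ r₃ + FvXZ k₂ (r₂ + r₃) =
        FvXZ k₂ (bounceThree k₁ k₂ r₂ r₃) + r₂) ∨
    (2 * k₁ < r₂ + r₃ + bounceThree k₁ k₂ r₂ r₃ ∧
      phiXZ k₁ k₂ r₂ r₃ + (r₂ + r₃ + bounceThree k₁ k₂ r₂ r₃) =
        FvXZ k₂ (bounceThree k₁ k₂ r₂ r₃) + 2 * k₁) := by
  have hc := bounce_char k₁ k₂ r₂ r₃ h2 h3
  have sfa := FvXZ_spec k₂ (r₂ + r₃)
  have sfb := FvXZ_spec k₂ (bounceThree k₁ k₂ r₂ r₃)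
  unfold phiXZ
  split_ifs <;> omega

lemma keyXZ (k₁ k₂ r₂ r₃ : ℕ) (h2 : r₂ ≤ k₁) (h3 : r₃ ≤ r₂ + k₂) :
    phiXZ k₁ k₂ r₂ r₃ ≤ k₁ ∧
    bounceThree k₁ k₂ r₂ r₃ - phiXZ k₁ k₂ r₂ r₃ ≤ phiXZ k₁ k₂ r₂ r₃ + k₂ ∧
    phiXZ k₁ k₂ r₂ r₃ + (bounceThree k₁ k₂ r₂ r₃ - phiXZ k₁ k₂ r₂ r₃) =
      bounceThree k₁ k₂ r₂ r₃ ∧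
    bounceThree k₁ k₂ (phiXZ k₁ k₂ r₂ r₃)
      (bounceThree k₁ k₂ r₂ r₃ - phiXZ k₁ k₂ r₂ r₃) = r₂ + r₃ ∧
    phiXZ k₁ k₂ (phiXZ k₁ k₂ r₂ r₃)
      (bounceThree k₁ k₂ r₂ r₃ - phiXZ k₁ k₂ r₂ r₃) = r₂ := by
  have hc := bounce_char k₁ k₂ r₂ r₃ h2 h3
  have sfa := FvXZ_spec k₂ (r₂ + r₃)
  have sfb := FvXZ_spec k₂ (bounceThree k₁ k₂ r₂ r₃)
  have hp := phiXZ_char k₁ k₂ r₂ r₃ h2 h3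
  set a := r₂ + r₃ with ha
  set b := bounceThree k₁ k₂ r₂ r₃ with hb
  set s₂ := phiXZ k₁ k₂ r₂ r₃ with hs₂
  have B1 : s₂ ≤ k₁ := by omega
  have B2 : s₂ ≤ b := by omega
  have B3 : b - s₂ ≤ s₂ + k₂ := by omega
  have hbb : s₂ + (b - s₂) = b := by omega
  have hc2 := bounce_char k₁ k₂ s₂ (b - s₂) B1 B3
  rw [hbb] at hc2
  have h4 : bounceThree k₁ k₂ s₂ (b - s₂) = a := by omega
  have hp2 := phiXZ_char k₁ k₂ s₂ (b - s₂) B1 B3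
  rw [hbb, h4] at hp2
  have h5 : phiXZ k₁ k₂ s₂ (b - s₂) = r₂ := by omega
  exact ⟨B1, B3, hbb, h4, h5⟩


set_option maxHeartbeats 1000000 in
open MvPolynomial in
theorem Cthree_symm (k₁ k₂ k₃ : ℕ) (h₁ : 0 < k₁) (h₂ : 0 < k₂) (h₃ : 0 < k₃) :
    MvPolynomial.rename (Equiv.swap (0 : Fin 2) 1) (Cthree k₁ k₂ k₃) =
      Cthree k₁ k₂ k₃ := by
  classical
  unfold Cthree
  simp only [map_sum, map_mul, map_pow, MvPolynomial.rename_X, Equiv.swap_apply_left,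
    Equiv.swap_apply_right]
  rw [Finset.sum_sigma', Finset.sum_sigma']
  refine Finset.sum_nbij'
    (fun p => ⟨phiXZ k₁ k₂ p.1 p.2, bounceThree k₁ k₂ p.1 p.2 - phiXZ k₁ k₂ p.1 p.2⟩)
    (fun p => ⟨phiXZ k₁ k₂ p.1 p.2, bounceThree k₁ k₂ p.1 p.2 - phiXZ k₁ k₂ p.1 p.2⟩)
    ?hi ?hj ?li ?ri ?h
  case hi =>
    rintro ⟨r₂, r₃⟩ hm
    simp only [Finset.mem_sigma, Finset.mem_range] at hm ⊢
    obtain ⟨K1, K2, _, _, _⟩ := keyXZ k₁ k₂ r₂ r₃ (by omega) (by omega)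
    exact ⟨by omega, by omega⟩
  case hj =>
    rintro ⟨r₂, r₃⟩ hm
    simp only [Finset.mem_sigma, Finset.mem_range] at hm ⊢
    obtain ⟨K1, K2, _, _, _⟩ := keyXZ k₁ k₂ r₂ r₃ (by omega) (by omega)
    exact ⟨by omega, by omega⟩
  case li =>
    rintro ⟨r₂, r₃⟩ hm
    dsimp only
    simp only [Finset.mem_sigma, Finset.mem_range] at hm
    obtain ⟨K1, K2, K3, K4, K5⟩ := keyXZ k₁ k₂ r₂ r₃ (by omega) (by omega)
    rw [K5, K4, Nat.add_sub_cancel_left]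
  case ri =>
    rintro ⟨r₂, r₃⟩ hm
    dsimp only
    simp only [Finset.mem_sigma, Finset.mem_range] at hm
    obtain ⟨K1, K2, K3, K4, K5⟩ := keyXZ k₁ k₂ r₂ r₃ (by omega) (by omega)
    rw [K5, K4, Nat.add_sub_cancel_left]
  case h =>
    rintro ⟨r₂, r₃⟩ hm
    dsimp only
    simp only [Finset.mem_sigma, Finset.mem_range] at hm
    obtain ⟨K1, K2, K3, K4, K5⟩ := keyXZ k₁ k₂ r₂ r₃ (by omega) (by omega)
    rw [K3, K4]
    exact mul_comm _ _
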